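/- arXiv:2304.07451 — 2 statements merged into one kernel-verified Lean document; each statement's English description precedes it below -/
import Mathlib

section
/- Let ρ > 0, γ ≥ 0 and let f, f*, c, c*, d₀, d, d*, v₀, v, v*, t, t* ∈ ℝ^q satisfy: f + ρ(c − d₀ + v₀) = 0; γ t − ρ(c − d + v₀) = 0; v = v₀ + c − d; f* + ρ(c* − d* + v*) = 0; γ t* − ρ(c* − d* + v*) = 0; and c* = d*. Then (ρ/2)(‖v₀ − v*‖₂² − ‖v − v*‖₂²) + (ρ/2)(‖d₀ − d*‖₂² − ‖d − d*‖₂²) = (f − f*)ᵀ(c − c*) + γ (t − t*)ᵀ(d − d*) + (ρ/2)‖(c − c*) − (d₀ − d*)‖₂². -/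
open scoped RealInnerProductSpace

/-- One-step energy identity (eq. (S.7) of the supplementary material) for the
lasso block of the ADMM algorithm: under the optimality conditions of one ADMM
iteration and the fixed-point conditions of a solution,
`(ρ/2)(‖v₀ − v*‖² − ‖v − v*‖²) + (ρ/2)(‖d₀ − d*‖² − ‖d − d*‖²)
  = (f − f*)ᵀ(c − c*) + γ(t − t*)ᵀ(d − d*) + (ρ/2)‖(c − c*) − (d₀ − d*)‖²`. -/
theorem admm_lasso_energy_identity {q : ℕ} (ρ γ : ℝ) (hρ : 0 < ρ) (hγ : 0 ≤ γ)
    (f fs c cs d₀ d ds v₀ v vs t ts : EuclideanSpace ℝ (Fin q))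
    (h1 : f + ρ • (c - d₀ + v₀) = 0)
    (h2 : γ • t - ρ • (c - d + v₀) = 0)
    (h3 : v = v₀ + c - d)
    (h4 : fs + ρ • (cs - ds + vs) = 0)
    (h5 : γ • ts - ρ • (cs - ds + vs) = 0)
    (h6 : cs = ds) :
    ρ / 2 * (‖v₀ - vs‖ ^ 2 - ‖v - vs‖ ^ 2) + ρ / 2 * (‖d₀ - ds‖ ^ 2 - ‖d - ds‖ ^ 2) =
      ⟪f - fs, c - cs⟫ + γ * ⟪t - ts, d - ds⟫ +
        ρ / 2 * ‖(c - cs) - (d₀ - ds)‖ ^ 2 := by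
  have key : ∀ i : Fin q,
      ρ / 2 * ((v₀ i - vs i)^2 - (v i - vs i)^2) + ρ / 2 * ((d₀ i - ds i)^2 - (d i - ds i)^2)
      = (f i - fs i) * (c i - cs i) + γ * ((t i - ts i) * (d i - ds i))
        + ρ / 2 * ((c i - cs i) - (d₀ i - ds i))^2 := by
    intro i
    have h1i := congrArg (fun x => x i) h1
    have h2i := congrArg (fun x => x i) h2
    have h3i := congrArg (fun x => x i) h3
    have h4i := congrArg (fun x => x i) h4
    have h5i := congrArg (fun x => x i) h5
    have h6i := congrArg (fun x => x i) h6
    simp only [PiLp.add_apply, PiLp.sub_apply, PiLp.smul_apply, PiLp.zero_apply,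
      smul_eq_mul] at h1i h2i h3i h4i h5i h6i
    have hf : f i = -(ρ * (c i - d₀ i + v₀ i)) := by linarith
    have hfs : fs i = -(ρ * (cs i - ds i + vs i)) := by linarith
    rw [hf, hfs, h3i, h6i]
    linear_combination (ds i - d i) * h2i + (d i - ds i) * h5i + (ρ * (d i - ds i)) * h6i
  simp only [← real_inner_self_eq_norm_sq, PiLp.inner_apply, RCLike.inner_apply,
    conj_trivial, PiLp.sub_apply, Finset.mul_sum, ← Finset.sum_sub_distrib,
    ← Finset.sum_add_distrib]
  exact Finset.sum_congr rfl fun i _ => by linear_combination key i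
end

section
/- Let ρ > 0, λ ≥ 0 and let h, h*, β, β*, η₀, η, η*, u₀, u, u*, s, s* ∈ ℝ^M satisfy: h − ρ(η₀ − β + u₀) = 0; λ s + ρ(η − β + u₀) = 0; u = u₀ + η − β; h* − ρ(η* − β* + u*) = 0; λ s* + ρ(η* − β* + u*) = 0; and β* = η*. Then (ρ/2)(‖u₀ − u*‖₂² − ‖u − u*‖₂²) + (ρ/2)(‖η₀ − η*‖₂² − ‖η − η*‖₂²) = (h − h*)ᵀ(β − β*) + λ (s − s*)ᵀ(η − η*) + (ρ/2)‖(β − β*) − (η₀ − η*)‖₂². -/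
open scoped RealInnerProductSpace

/-- One-step energy identity for the group-lasso block of the ADMM algorithm
(the analogue of eq. (S.7) of the supplementary material): under the optimality
conditions of one ADMM iteration and the fixed-point conditions of a solution,
`(ρ/2)(‖u₀ − u*‖² − ‖u − u*‖²) + (ρ/2)(‖η₀ − η*‖² − ‖η − η*‖²)
  = (h − h*)ᵀ(β − β*) + λ(s − s*)ᵀ(η − η*) + (ρ/2)‖(β − β*) − (η₀ − η*)‖²`. -/
theorem admm_grouplasso_energy_identity {M : ℕ} (ρ lam : ℝ) (hρ : 0 < ρ) (hlam : 0 ≤ lam)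
    (h hs β βs η₀ η ηs u₀ u us s ss : EuclideanSpace ℝ (Fin M))
    (h1 : h - ρ • (η₀ - β + u₀) = 0)
    (h2 : lam • s + ρ • (η - β + u₀) = 0)
    (h3 : u = u₀ + η - β)
    (h4 : hs - ρ • (ηs - βs + us) = 0)
    (h5 : lam • ss + ρ • (ηs - βs + us) = 0)
    (h6 : βs = ηs) :
    ρ / 2 * (‖u₀ - us‖ ^ 2 - ‖u - us‖ ^ 2) + ρ / 2 * (‖η₀ - ηs‖ ^ 2 - ‖η - ηs‖ ^ 2) =
      ⟪h - hs, β - βs⟫ + lam * ⟪s - ss, η - ηs⟫ +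
        ρ / 2 * ‖(β - βs) - (η₀ - ηs)‖ ^ 2 := by
  subst h3 h6
  have e1 : h = ρ • (η₀ - β + u₀) := sub_eq_zero.mp h1
  have e4 : hs = ρ • (βs - βs + us) := sub_eq_zero.mp h4
  subst e1 e4
  have e2 : ∀ i, lam * s i = -(ρ * (η i - β i + u₀ i)) := by
    intro i
    have := congrArg (fun v => v i) h2
    simp only [PiLp.add_apply, PiLp.smul_apply, PiLp.sub_apply, smul_eq_mul,
      PiLp.zero_apply] at this
    linarith
  have e5 : ∀ i, lam * ss i = -(ρ * (βs i - βs i + us i)) := by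
    intro i
    have := congrArg (fun v => v i) h5
    simp only [PiLp.add_apply, PiLp.smul_apply, PiLp.sub_apply, smul_eq_mul,
      PiLp.zero_apply] at this
    linarith
  simp only [← real_inner_self_eq_norm_sq, PiLp.inner_apply, RCLike.inner_apply,
    conj_trivial, PiLp.sub_apply, PiLp.add_apply, PiLp.smul_apply, smul_eq_mul,
    ← Finset.sum_sub_distrib, Finset.mul_sum, ← Finset.sum_add_distrib]
  refine Finset.sum_congr rfl fun i _ => ?_
  linear_combination (η i - βs i) * (e5 i) - (η i - βs i) * (e2 i)
end
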